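/- Let f₀:[0,1]→ℝ be continuous, strictly increasing, and strictly negative, with f₀(1) < 0. Then Ω̂ₙ = κ₂ − f₀(1)/(2n) + O(n^{−2}) as n → ∞, where κ₂ = ∫₀¹ s f₀(s) ds and Ω̂ₙ = ∫₀¹ s f₀(s)ds − ((n+1)/n)∫₀¹ s^{2n+1} f₀(s) ds; more precisely, there is a constant C such that |Ω̂ₙ − κ₂ + f₀(1)/(2n)| ≤ C/n² for all n ≥ 1. -/

import Mathlib

open MeasureTheory Set

theorem stmt13 (f₀ : ℝ → ℝ) (hc : ContinuousOn f₀ (Set.Icc 0 1))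
    (hlip : ∃ K : NNReal, LipschitzOnWith K f₀ (Set.Icc 0 1))
    (hm : StrictMonoOn f₀ (Set.Icc 0 1))
    (hneg : ∀ r ∈ Set.Icc (0:ℝ) 1, f₀ r < 0) :
    ∃ C : ℝ, ∀ n : ℕ, 1 ≤ n →
      |((∫ s in (0:ℝ)..1, s * f₀ s)
          - (((n:ℝ)+1)/n) * ∫ s in (0:ℝ)..1, s^(2*n+1) * f₀ s)
        - (∫ s in (0:ℝ)..1, s * f₀ s) + f₀ 1 / (2*n)| ≤ C / n^2 := by
  obtain ⟨K, hK⟩ := hlip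
  refine ⟨K, fun n hn => ?_⟩
  have hn' : (1:ℝ) ≤ n := by exact_mod_cast hn
  have hn0 : (0:ℝ) < n := by linarith
  -- integrability facts
  have h1 : IntervalIntegrable (fun s => s^(2*n+1) * f₀ s) volume 0 1 := by
    apply ContinuousOn.intervalIntegrable
    rw [uIcc_of_le (by norm_num : (0:ℝ) ≤ 1)]
    exact (continuous_pow _).continuousOn.mul hc
  have h2 : IntervalIntegrable (fun s : ℝ => s^(2*n+1) * f₀ 1) volume 0 1 :=
    ((continuous_pow _).mul continuous_const).intervalIntegrable 0 1
  -- value of ∫ s^(2n+1) * f₀ 1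
  have hI : (∫ s in (0:ℝ)..1, s^(2*n+1) * f₀ 1) = f₀ 1 / (2*(n:ℝ)+2) := by
    rw [intervalIntegral.integral_mul_const, integral_pow]
    push_cast
    rw [one_pow, zero_pow (by positivity)]
    ring
  set D := ∫ s in (0:ℝ)..1, s^(2*n+1) * (f₀ 1 - f₀ s) with hD
  have hsplit : D = (∫ s in (0:ℝ)..1, s^(2*n+1) * f₀ 1)
      - ∫ s in (0:ℝ)..1, s^(2*n+1) * f₀ s := by
    rw [hD, ← intervalIntegral.integral_sub h2 h1]
    congr 1; ext s; ring
  -- the expression equals ((n+1)/n) * D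
  have key : ((∫ s in (0:ℝ)..1, s * f₀ s)
          - (((n:ℝ)+1)/n) * ∫ s in (0:ℝ)..1, s^(2*n+1) * f₀ s)
        - (∫ s in (0:ℝ)..1, s * f₀ s) + f₀ 1 / (2*n)
      = (((n:ℝ)+1)/n) * D := by
    rw [hsplit, hI]
    field_simp
    ring
  rw [key]
  -- bound |D|
  have hDb : |D| ≤ (K:ℝ) * (1/(2*(n:ℝ)+2) - 1/(2*(n:ℝ)+3)) := by
    have hg : IntervalIntegrable (fun s : ℝ => (K:ℝ) * (s^(2*n+1) - s^(2*n+2)))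
        volume 0 1 :=
      (continuous_const.mul ((continuous_pow _).sub (continuous_pow _))).intervalIntegrable 0 1
    have hle : ‖D‖ ≤ |∫ s in (0:ℝ)..1, (K:ℝ) * (s^(2*n+1) - s^(2*n+2))| := by
      apply intervalIntegral.norm_integral_le_abs_of_norm_le _ hg
      filter_upwards [ae_restrict_mem measurableSet_uIoc] with s hs
      rw [uIoc_of_le (by norm_num : (0:ℝ) ≤ 1)] at hs
      have hs0 : 0 < s := hs.1
      have hs1 : s ≤ 1 := hs.2
      have hmem : s ∈ Set.Icc (0:ℝ) 1 := ⟨le_of_lt hs0, hs1⟩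
      have hlp := hK.dist_le_mul 1 (by norm_num) s hmem
      rw [Real.dist_eq, Real.dist_eq, abs_of_nonneg (by linarith : (0:ℝ) ≤ 1 - s)] at hlp
      have hpow : (0:ℝ) ≤ s^(2*n+1) := by positivity
      rw [Real.norm_eq_abs, abs_mul, abs_of_nonneg hpow]
      calc s^(2*n+1) * |f₀ 1 - f₀ s| ≤ s^(2*n+1) * ((K:ℝ) * (1-s)) := by
            apply mul_le_mul_of_nonneg_left hlp hpow
        _ = (K:ℝ) * (s^(2*n+1) - s^(2*n+2)) := by ring
    have hval : (∫ s in (0:ℝ)..1, (K:ℝ) * (s^(2*n+1) - s^(2*n+2)))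
        = (K:ℝ) * (1/(2*(n:ℝ)+2) - 1/(2*(n:ℝ)+3)) := by
      rw [intervalIntegral.integral_const_mul, intervalIntegral.integral_sub
        ((continuous_pow _).intervalIntegrable 0 1) ((continuous_pow _).intervalIntegrable 0 1),
        integral_pow, integral_pow]
      push_cast
      rw [one_pow, one_pow, zero_pow (by positivity), zero_pow (by positivity)]
      ring
    calc |D| = ‖D‖ := (Real.norm_eq_abs D).symm
      _ ≤ |∫ s in (0:ℝ)..1, (K:ℝ) * (s^(2*n+1) - s^(2*n+2))| := hle
      _ = (K:ℝ) * (1/(2*(n:ℝ)+2) - 1/(2*(n:ℝ)+3)) := by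
          rw [hval, abs_of_nonneg]
          exact mul_nonneg K.coe_nonneg (by
            rw [sub_nonneg]
            apply one_div_le_one_div_of_le <;> linarith)
  -- combine
  have hfac : (0:ℝ) ≤ ((n:ℝ)+1)/n := by positivity
  rw [abs_mul, abs_of_nonneg hfac]
  have hKnn : (0:ℝ) ≤ K := K.coe_nonneg
  have step : ((n:ℝ)+1)/n * |D| ≤ ((n:ℝ)+1)/n * ((K:ℝ) * (1/(2*(n:ℝ)+2) - 1/(2*(n:ℝ)+3))) :=
    mul_le_mul_of_nonneg_left hDb hfac
  refine step.trans ?_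
  have expand : ((n:ℝ)+1)/n * ((K:ℝ) * (1/(2*(n:ℝ)+2) - 1/(2*(n:ℝ)+3)))
      = (K:ℝ) * (((n:ℝ)+1)/((n:ℝ)*((2*(n:ℝ)+2)*(2*(n:ℝ)+3)))) := by
    field_simp
    ring
  rw [expand, div_eq_mul_one_div (K:ℝ)]
  apply mul_le_mul_of_nonneg_left _ hKnn
  rw [div_le_div_iff₀ (by positivity) (by positivity)]
  nlinarith [sq_nonneg ((n:ℝ)-1), mul_pos hn0 hn0]
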